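/- Let G be a finite graph with v vertices, e non-loop edges and ℓ loops, and let 0 < p ≤ 1. Then the total variation distance between the law of the p-sampling S_p(G) and the law of the with-replacement p-sampling S̃_p(G) is at most 2e(p³ + 3p²/v + p/v²) + 2ℓ(p² + p/v) + p, and hence (using v ≥ max(√(2e), ℓ)) at most (2e·p² + 3√(2e)·p + 2ℓ·p + 4)·p. -/

import Mathlib

open Filter Finset
open scoped Classical ENNReal

/-- A finite graph on vertex set `Fin n`, possibly with loops, without multiple edges. -/
structure FinGraph where
  n : ℕ
  adj : Fin n → Fin n → Bool
  symm : ∀ i j, adj i j = adj j i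

namespace FinGraph

/-- Number of vertices. -/
def v (G : FinGraph) : ℕ := G.n

/-- Number of non-loop edges. -/
def e (G : FinGraph) : ℕ :=
  ((univ : Finset (Fin G.n × Fin G.n)).filter
    (fun q => G.adj q.1 q.2 = true ∧ q.1 < q.2)).card

/-- Number of loops. -/
def loops (G : FinGraph) : ℕ :=
  ((univ : Finset (Fin G.n)).filter (fun i => G.adj i i = true)).card

/-- Degree of a vertex (number of neighbours via non-loop edges). -/
def deg (G : FinGraph) (i : Fin G.n) : ℕ :=
  ((univ : Finset (Fin G.n)).filter (fun j => G.adj i j = true ∧ j ≠ i)).card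

/-- A graph is loopless when no vertex is adjacent to itself. -/
def Loopless (G : FinGraph) : Prop := ∀ i, G.adj i i = false

/-- The induced subgraph on a set `S` of vertices. -/
def induce (G : FinGraph) (S : Finset (Fin G.n)) : FinGraph where
  n := S.card
  adj i j := G.adj (S.orderIsoOfFin rfl i).1 (S.orderIsoOfFin rfl j).1
  symm i j := G.symm _ _

/-- The graph obtained by discarding all isolated vertices (vertices in no edge,
loop or non-loop). -/
def core (G : FinGraph) : FinGraph :=
  G.induce ((univ : Finset (Fin G.n)).filter (fun i => ∃ j, G.adj i j = true))

/-- Graph isomorphism. -/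
def Iso (G H : FinGraph) : Prop :=
  ∃ eqv : Fin G.n ≃ Fin H.n, ∀ i j, G.adj i j = H.adj (eqv i) (eqv j)

/-- Average degree `d̄(G)`. -/
noncomputable def avgDeg (G : FinGraph) : ℝ :=
  (1 / (G.n : ℝ)) * ∑ i : Fin G.n, (G.deg i : ℝ)

/-- Square average degree `d²̄(G)`. -/
noncomputable def sqAvgDeg (G : FinGraph) : ℝ :=
  (1 / (G.n : ℝ)) * ∑ i : Fin G.n, (G.deg i : ℝ) ^ 2

/-- Edge density `ρ(G) = 2e(G)/v(G)²`. -/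
noncomputable def density (G : FinGraph) : ℝ :=
  2 * (G.e : ℝ) / (G.n : ℝ) ^ 2

end FinGraph

/-- Unlabeled finite graphs: isomorphism classes of finite graphs. -/
def UGraph := Quot FinGraph.Iso

/-- The isomorphism class of a finite graph. -/
def FinGraph.cls (G : FinGraph) : UGraph := Quot.mk _ G

/-- Probability that independent Bernoulli(min p 1) vertex selection picks exactly `S`. -/
noncomputable def sampleWeight (G : FinGraph) (p : ℝ) (S : Finset (Fin G.n)) : ℝ :=
  (min p 1) ^ S.card * (1 - min p 1) ^ (G.n - S.card)

/-- Law (pmf) of the `p`-sampling `S_p(G)`: keep each vertex independently with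
probability `min p 1`, take the induced subgraph, discard isolated vertices,
and pass to the isomorphism class. -/
noncomputable def pSampleLaw (G : FinGraph) (p : ℝ) : UGraph → ℝ := fun H =>
  ∑ S ∈ (univ : Finset (Fin G.n)).powerset,
    sampleWeight G p S * (if ((G.induce S).core).cls = H then 1 else 0)

/-- The graph on `Fin k` pulled back along a vertex sample `x`. -/
def seqGraph (G : FinGraph) (k : ℕ) (x : Fin k → Fin G.n) : FinGraph where
  n := k
  adj i j := G.adj (x i) (x j)
  symm i j := G.symm _ _

/-- Law (pmf) of the with-replacement `p`-sampling `S̃_p(G)`: draw `K ~ Poisson(p·v(G))`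
vertices uniformly with replacement, form the graph on `Fin K` in which `i, j` are joined
whenever `(x_i, x_j)` is an edge of `G`, discard isolated vertices, and pass to the
isomorphism class. -/
noncomputable def wrSampleLaw (G : FinGraph) (p : ℝ) : UGraph → ℝ := fun H =>
  ∑' k : ℕ,
    (Real.exp (-(p * (G.v : ℝ))) * (p * (G.v : ℝ)) ^ k / (Nat.factorial k : ℝ)) *
      ((((univ : Finset (Fin k → Fin G.n)).filter
          (fun x => ((seqGraph G k x).core).cls = H)).card : ℝ) / ((G.v : ℝ)) ^ k)

/-- Total variation distance `sup_A |P(A) − Q(A)|` between two pmf-style laws on a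
countable discrete space. -/
noncomputable def dTV {α : Type*} (f g : α → ℝ) : ℝ :=
  ⨆ A : Set α, |∑' x : A, (f x.1 - g x.1)|

/-- `∑_i d_i · 1[d_i > k·√(e(G))]`, the total degree of vertices of degree exceeding
`k·√(e(G))`. -/
noncomputable def tailDegSum (G : FinGraph) (k : ℝ) : ℝ :=
  ∑ i : Fin G.n,
    (if k * Real.sqrt (G.e : ℝ) < (G.deg i : ℝ) then (G.deg i : ℝ) else 0)

/-- A sequence of graphs is uniformly sampling regular. -/
def UniformlySamplingRegular (G : ℕ → FinGraph) : Prop :=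
  ∀ ε : ℝ, 0 < ε → ∃ k : ℝ, 0 < k ∧ ∀ j,
    (1 / ((G j).e : ℝ)) * tailDegSum (G j) k < ε

/-- `E[e(S_p(G)) · 1[e(S_p(G)) > M]]`, the tail expectation of the number of non-loop
edges of the `p`-sampled subgraph (discarding isolated vertices does not change it). -/
noncomputable def expEdgeTail (G : FinGraph) (p M : ℝ) : ℝ :=
  ∑ S ∈ (univ : Finset (Fin G.n)).powerset,
    sampleWeight G p S *
      (if M < ((G.induce S).e : ℝ) then ((G.induce S).e : ℝ) else 0)

/-- `E[e(S_p(G))]`, the expected number of non-loop edges of the `p`-sampled subgraph. -/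
noncomputable def expEdge (G : FinGraph) (p : ℝ) : ℝ :=
  ∑ S ∈ (univ : Finset (Fin G.n)).powerset,
    sampleWeight G p S * ((G.induce S).e : ℝ)

/-- Law (pmf on ℕ) of the number of non-loop edges of the `p`-sampled subgraph. -/
noncomputable def edgeLaw (G : FinGraph) (p : ℝ) (m : ℕ) : ℝ :=
  ∑ S ∈ (univ : Finset (Fin G.n)).powerset,
    sampleWeight G p S * (if (G.induce S).e = m then 1 else 0)

/-- Number of kept neighbours (via non-loop edges) of vertex `i` under the selection `S`. -/
def keptNbrCount (G : FinGraph) (S : Finset (Fin G.n)) (i : Fin G.n) : ℕ :=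
  ((univ : Finset (Fin G.n)).filter (fun j => G.adj i j = true ∧ j ≠ i ∧ j ∈ S)).card

/-- `Pr(D_i ≥ 2)`: the probability that vertex `i` is kept and has at least two kept
neighbours, under independent Bernoulli(min p 1) vertex selection. -/
noncomputable def probD2 (G : FinGraph) (p : ℝ) (i : Fin G.n) : ℝ :=
  ∑ S ∈ (univ : Finset (Fin G.n)).powerset,
    sampleWeight G p S * (if i ∈ S ∧ 2 ≤ keptNbrCount G S i then 1 else 0)

/-- Probability that some kept vertex has at least two kept neighbours. -/
noncomputable def probSomeD2 (G : FinGraph) (p : ℝ) : ℝ :=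
  ∑ S ∈ (univ : Finset (Fin G.n)).powerset,
    sampleWeight G p S * (if ∃ i ∈ S, 2 ≤ keptNbrCount G S i then 1 else 0)

/-- Number of isolated kept (non-loop) edges: both endpoints kept, and each endpoint has
exactly one kept neighbour. -/
def isoEdgeCount (G : FinGraph) (S : Finset (Fin G.n)) : ℕ :=
  ((univ : Finset (Fin G.n × Fin G.n)).filter (fun q =>
    G.adj q.1 q.2 = true ∧ q.1 < q.2 ∧ q.1 ∈ S ∧ q.2 ∈ S ∧
    keptNbrCount G S q.1 = 1 ∧ keptNbrCount G S q.2 = 1)).card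


namespace SA

open FinGraph

noncomputable section

/-- indicator of a proposition with values in `ℝ≥0∞`. -/
def ind (P : Prop) : ℝ≥0∞ := if P then 1 else 0

lemma ind_le_one (P : Prop) : ind P ≤ 1 := by
  unfold ind; split <;> simp

lemma ind_of (P : Prop) (h : P) : ind P = 1 := if_pos h

lemma ind_of_not (P : Prop) (h : ¬ P) : ind P = 0 := if_neg h

/-- Core isomorphism from an adjacency-preserving equivalence of
non-isolated vertices. -/
lemma iso_core_of_equiv {G H : FinGraph}
    (e : {i : Fin G.n // ∃ j, G.adj i j = true} ≃ {i : Fin H.n // ∃ j, H.adj i j = true})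
    (he : ∀ a b, G.adj a.1 b.1 = H.adj (e a).1 (e b).1) :
    G.core.Iso H.core := by
  classical
  set RG := (univ : Finset (Fin G.n)).filter (fun i => ∃ j, G.adj i j = true) with hRG
  set RH := (univ : Finset (Fin H.n)).filter (fun i => ∃ j, H.adj i j = true) with hRH
  let rG : {x // x ∈ RG} ≃ {i : Fin G.n // ∃ j, G.adj i j = true} :=
    Equiv.subtypeEquivRight (fun x => by simp [hRG])
  let rH : {x // x ∈ RH} ≃ {i : Fin H.n // ∃ j, H.adj i j = true} :=
    Equiv.subtypeEquivRight (fun x => by simp [hRH])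
  let oG := RG.orderIsoOfFin rfl
  let oH := RH.orderIsoOfFin rfl
  let E : Fin G.core.n ≃ Fin H.core.n :=
    oG.toEquiv.trans ((rG.trans (e.trans rH.symm)).trans oH.toEquiv.symm)
  have main : ∀ z, ((oH (E z)) : Fin H.n) = (e (rG (oG z))).1 := by
    intro z
    exact congrArg Subtype.val (oH.apply_symm_apply _)
  refine ⟨E, ?_⟩
  intro i j
  show G.adj (oG i).1 (oG j).1 = H.adj (oH (E i)).1 (oH (E j)).1
  rw [main i, main j]
  exact he (rG (oG i)) (rG (oG j))

lemma iso_core_of_iso {G H : FinGraph} (h : G.Iso H) : G.core.Iso H.core := by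
  obtain ⟨eqv, heqv⟩ := h
  refine iso_core_of_equiv (Equiv.subtypeEquiv eqv (fun i => ?_)) (fun a b => ?_)
  · constructor
    · rintro ⟨j, hj⟩; exact ⟨eqv j, by rw [← heqv]; exact hj⟩
    · rintro ⟨j, hj⟩; exact ⟨eqv.symm j, by rw [heqv i (eqv.symm j)]; simpa using hj⟩
  · exact heqv a.1 b.1

lemma cls_core_eq {G H : FinGraph} (h : G.Iso H) : G.core.cls = H.core.cls :=
  Quot.sound (iso_core_of_iso h)

/-- count vector of a vertex sample -/
def cnt {n k : ℕ} (x : Fin k → Fin n) : Fin n → ℕ :=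
  fun i => ((univ : Finset (Fin k)).filter (fun j => x j = i)).card

lemma sum_cnt {n k : ℕ} (x : Fin k → Fin n) : ∑ i, cnt x i = k := by
  classical
  have := Finset.card_eq_sum_card_fiberwise
      (f := x) (s := (univ : Finset (Fin k))) (t := (univ : Finset (Fin n)))
      (fun a _ => mem_univ _)
  simpa [cnt] using this.symm

lemma cnt_comp {n k m : ℕ} (x : Fin k → Fin n) (e : Fin m ≃ Fin k) :
    cnt (x ∘ e) = cnt x := by
  classical
  funext i
  unfold cnt
  rw [← Fintype.card_subtype, ← Fintype.card_subtype]
  exact Fintype.card_congr (Equiv.subtypeEquiv e (fun a => by simp))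

/-- fiberwise equivalence from equal counts -/
def fibEquiv {n k m : ℕ} (x : Fin k → Fin n) (y : Fin m → Fin n)
    (h : cnt x = cnt y) : ∀ i : Fin n, {a // x a = i} ≃ {b // y b = i} := by
  intro i
  refine Fintype.equivOfCardEq ?_
  rw [Fintype.card_subtype, Fintype.card_subtype]
  exact congrFun h i

/-- a global equivalence matching values, from equal counts -/
def valEquiv {n k m : ℕ} (x : Fin k → Fin n) (y : Fin m → Fin n)
    (h : cnt x = cnt y) : Fin k ≃ Fin m :=
  (Equiv.sigmaFiberEquiv x).symm.trans
    ((Equiv.sigmaCongrRight (fibEquiv x y h)).trans (Equiv.sigmaFiberEquiv y))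

lemma valEquiv_spec {n k m : ℕ} (x : Fin k → Fin n) (y : Fin m → Fin n)
    (h : cnt x = cnt y) : ∀ a, y (valEquiv x y h a) = x a := by
  intro a
  show y ((Equiv.sigmaFiberEquiv y) (Equiv.sigmaCongrRight (fibEquiv x y h)
    ((Equiv.sigmaFiberEquiv x).symm a))) = x a
  have : (Equiv.sigmaFiberEquiv x).symm a = ⟨x a, a, rfl⟩ := rfl
  rw [this]
  exact ((fibEquiv x y h (x a)) ⟨a, rfl⟩).2

lemma seq_iso_of_cnt {G : FinGraph} {k m : ℕ} {x : Fin k → Fin G.n} {y : Fin m → Fin G.n}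
    (h : cnt x = cnt y) : (seqGraph G k x).Iso (seqGraph G m y) := by
  refine ⟨valEquiv x y h, fun a b => ?_⟩
  show G.adj (x a) (x b) = G.adj (y (valEquiv x y h a)) (y (valEquiv x y h b))
  exact (congrArg₂ G.adj (valEquiv_spec x y h a) (valEquiv_spec x y h b)).symm

/-- canonical list representative of a multiplicity vector -/
def repL (n : ℕ) (N : Fin n → ℕ) : List (Fin n) :=
  (List.finRange n).flatMap (fun i => List.replicate (N i) i)

lemma length_repL (n : ℕ) (N : Fin n → ℕ) : (repL n N).length = ∑ i, N i := by
  rw [repL, List.length_flatMap, Fin.sum_univ_def]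
  congr 1
  simp [Function.comp]

lemma cnt_get {n : ℕ} (L : List (Fin n)) : cnt (L.get) = fun i => L.count i := by
  funext i
  induction L with
  | nil => simp [cnt]
  | cons a t ih =>
      have key : (∑ j : Fin (t.length+1), if (a :: t).get j = i then 1 else 0)
          = ((if a = i then 1 else 0) + ∑ j : Fin t.length, if t.get j = i then 1 else 0) := by
        rw [Fin.sum_univ_succ]
        simp [List.get]
        exact if_congr Iff.rfl rfl rfl
      have h1 : cnt ((a :: t).get) i = (if a = i then 1 else 0) + cnt (t.get) i := by
        unfold cnt
        rw [Finset.card_filter, Finset.card_filter]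
        exact key
      rw [h1, ih, List.count_cons]
      by_cases h : a = i <;> simp [h, beq_iff_eq, add_comm]

lemma cnt_repL (n : ℕ) (N : Fin n → ℕ) : cnt ((repL n N).get) = N := by
  rw [cnt_get]
  funext i
  rw [repL, List.count_flatMap]
  have : ∀ j : Fin n, (List.count i ∘ fun i => List.replicate (N i) i) j
      = if j = i then N i else 0 := by
    intro j
    simp only [Function.comp, List.count_replicate, beq_iff_eq]
    split <;> simp_all
  rw [List.map_congr_left (fun j _ => this j)]
  rw [← Fin.sum_univ_def]
  simp

end

end SA

namespace SA

open FinGraph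

/-- Permutations carrying `x₀` to `x` correspond to families of fiber bijections. -/
def stabEquiv {v k : ℕ} (x₀ x : Fin k → Fin v) :
    {σ : Equiv.Perm (Fin k) // x₀ ∘ ⇑σ = x} ≃ (∀ i : Fin v, {a // x a = i} ≃ {a // x₀ a = i}) where
  toFun := fun σp i =>
    { toFun := fun a => ⟨σp.1 a.1, (congrFun σp.2 a.1).trans a.2⟩
      invFun := fun b => ⟨σp.1.symm b.1, by
        have h1 := congrFun σp.2 (σp.1.symm b.1)
        simp only [Function.comp, Equiv.apply_symm_apply] at h1
        rw [← h1]; exact b.2⟩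
      left_inv := fun a => by simp
      right_inv := fun b => by simp }
  invFun := fun F =>
    ⟨(Equiv.sigmaFiberEquiv x).symm.trans
      ((Equiv.sigmaCongrRight F).trans (Equiv.sigmaFiberEquiv x₀)), by
      funext a
      exact (F (x a) ⟨a, rfl⟩).2⟩
  left_inv := fun σp => by
    apply Subtype.ext
    apply Equiv.ext
    intro a
    rfl
  right_inv := fun F => by
    funext i
    apply Equiv.ext
    rintro ⟨av, ha⟩
    subst ha
    rfl

lemma card_cnt_fiber_mul {v k : ℕ} (N : Fin v → ℕ) (hN : ∑ i, N i = k) :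
    (((univ : Finset (Fin k → Fin v)).filter (fun x => cnt x = N)).card) * ∏ i, Nat.factorial (N i) = Nat.factorial k := by
  classical
  obtain ⟨x₀, hx₀⟩ : ∃ x₀ : Fin k → Fin v, cnt x₀ = N := by
    refine ⟨(repL v N).get ∘ ⇑(finCongr (by rw [length_repL, hN] : k = (repL v N).length)), ?_⟩
    rw [cnt_comp, cnt_repL]
  have step1 : Nat.factorial k = ∑ x ∈ (univ : Finset (Fin k → Fin v)).filter (fun x => cnt x = N),
      ((univ : Finset (Equiv.Perm (Fin k))).filter (fun σ : Equiv.Perm (Fin k) => x₀ ∘ ⇑σ = x)).card := by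
    conv_lhs => rw [← Fintype.card_fin k, ← Fintype.card_perm, ← Finset.card_univ]
    refine Finset.card_eq_sum_card_fiberwise (fun σ _ => ?_)
    rw [Finset.mem_coe, mem_filter]
    refine ⟨mem_univ _, ?_⟩
    rw [cnt_comp x₀ (σ : Fin k ≃ Fin k), hx₀]
  have step2 : ∀ x : Fin k → Fin v, cnt x = N →
      ((univ : Finset (Equiv.Perm (Fin k))).filter (fun σ : Equiv.Perm (Fin k) => x₀ ∘ ⇑σ = x)).card
        = ∏ i, Nat.factorial (N i) := by
    intro x hx
    have hcard : ((univ : Finset (Equiv.Perm (Fin k))).filter (fun σ : Equiv.Perm (Fin k) => x₀ ∘ ⇑σ = x)).card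
        = Fintype.card {σ : Equiv.Perm (Fin k) // x₀ ∘ ⇑σ = x} :=
      (Fintype.card_subtype _).symm
    rw [hcard, Fintype.card_congr (stabEquiv x₀ x), Fintype.card_pi]
    refine Finset.prod_congr rfl (fun i _ => ?_)
    have e0 : {a // x a = i} ≃ {a // x₀ a = i} := fibEquiv x x₀ (by rw [hx, hx₀]) i
    rw [Fintype.card_equiv e0, Fintype.card_subtype]
    have : cnt x i = N i := by rw [hx]
    unfold cnt at this
    rw [this]
  rw [step1, Finset.sum_congr rfl (fun x hx => step2 x (by simpa using (mem_filter.mp hx).2)),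
    Finset.sum_const, smul_eq_mul]

end SA

namespace SA

noncomputable section

variable (p : ℝ)

/-- real Poisson(p) weight -/
def poisR (m : ℕ) : ℝ := Real.exp (-p) * p ^ m / Nat.factorial m

/-- `ℝ≥0∞` Poisson(p) weight -/
def poisE (m : ℕ) : ℝ≥0∞ := ENNReal.ofReal (poisR p m)

/-- the per-coordinate coupling weight on `Bool × ℕ` -/
def pio : Bool × ℕ → ℝ≥0∞ := fun a =>
  if a.2 = 0 then
    (if a.1 = true then ENNReal.ofReal (Real.exp (-p) - (1-p)) else ENNReal.ofReal (1-p))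
  else (if a.1 = true then poisE p a.2 else 0)

variable {p}

lemma poisR_nonneg (hp : 0 ≤ p) (m : ℕ) : 0 ≤ poisR p m := by
  unfold poisR
  positivity

lemma hasSum_poisR (hp : 0 ≤ p) : HasSum (poisR p) 1 := by
  have h := ProbabilityTheory.poissonPMFRealSum p.toNNReal
  have : (fun n => ProbabilityTheory.poissonPMFReal p.toNNReal n) = poisR p := by
    funext n
    unfold ProbabilityTheory.poissonPMFReal poisR
    rw [Real.coe_toNNReal p hp]
  rw [Real.coe_toNNReal p hp] at h
  exact h

lemma summable_poisR (hp : 0 ≤ p) : Summable (poisR p) := (hasSum_poisR hp).summable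

lemma tsum_poisR (hp : 0 ≤ p) : ∑' m, poisR p m = 1 := (hasSum_poisR hp).tsum_eq

lemma tsum_poisR_succ (hp : 0 ≤ p) : ∑' m, poisR p (m+1) = 1 - Real.exp (-p) := by
  have h := (summable_poisR hp).tsum_eq_zero_add
  rw [tsum_poisR hp] at h
  have h0 : poisR p 0 = Real.exp (-p) := by simp [poisR]
  rw [h0] at h
  linarith

lemma tsum_poisE (hp : 0 ≤ p) : ∑' m, poisE p m = 1 := by
  unfold poisE
  rw [← ENNReal.ofReal_tsum_of_nonneg (poisR_nonneg hp) (summable_poisR hp),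
    tsum_poisR hp, ENNReal.ofReal_one]

lemma exp_neg_le_one (hp : 0 ≤ p) : Real.exp (-p) ≤ 1 := by
  rw [← Real.exp_zero]
  exact Real.exp_le_exp.mpr (by linarith)

lemma one_sub_le_exp_neg : 1 - p ≤ Real.exp (-p) := by
  have := Real.add_one_le_exp (-p)
  linarith

lemma tsum_pio_true (hp : 0 ≤ p) :
    ∑' m, pio p (true, m) = ENNReal.ofReal p := by
  have hg : ∀ m : ℕ, pio p (true, m)
      = ENNReal.ofReal (poisR p m + (if m = 0 then Real.exp (-p) - (1-p) - poisR p 0 else 0)) := by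
    intro m
    match m with
    | 0 => simp [pio]
    | Nat.succ m => simp [pio, poisE]
  have hs0 : Summable (fun m : ℕ => (if m = 0 then Real.exp (-p) - (1-p) - poisR p 0 else 0)) :=
    summable_of_ne_finset_zero (s := {0}) (by intro m hm; simp at hm; simp [hm])
  have hsum : Summable (fun m => poisR p m
      + (if m = 0 then Real.exp (-p) - (1-p) - poisR p 0 else 0)) :=
    (summable_poisR hp).add hs0
  have hnn : ∀ m : ℕ, 0 ≤ poisR p m
      + (if m = 0 then Real.exp (-p) - (1-p) - poisR p 0 else 0) := by
    intro m
    match m with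
    | 0 => simp; nlinarith [one_sub_le_exp_neg (p := p)]
    | Nat.succ m => simpa using poisR_nonneg hp (m+1)
  rw [tsum_congr hg, ← ENNReal.ofReal_tsum_of_nonneg hnn hsum,
    Summable.tsum_add (summable_poisR hp) hs0, tsum_poisR hp, tsum_ite_eq (0:ℕ) _]
  have : poisR p 0 = Real.exp (-p) := by simp [poisR]
  rw [this]
  congr 1
  ring

lemma tsum_pio_false : ∑' m, pio p (false, m) = ENNReal.ofReal (1-p) := by
  rw [tsum_eq_sum (s := {0}) (by intro m hm; simp at hm; simp [pio, hm])]
  simp [pio]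

lemma tsum_pio_bool (hp1 : p ≤ 1) (m : ℕ) : ∑' b : Bool, pio p (b, m) = poisE p m := by
  rw [tsum_bool]
  match m with
  | 0 =>
      have h' : poisE p 0 = ENNReal.ofReal (Real.exp (-p)) := by simp [poisE, poisR]
      show ENNReal.ofReal (1-p) + ENNReal.ofReal (Real.exp (-p) - (1-p)) = _
      rw [h', ← ENNReal.ofReal_add (by linarith) (by nlinarith [one_sub_le_exp_neg (p := p)])]
      congr 1
      ring
  | Nat.succ m => simp [pio]

lemma tsum_pio_total (hp0 : 0 ≤ p) (hp1 : p ≤ 1) : ∑' a : Bool × ℕ, pio p a = 1 := by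
  rw [ENNReal.tsum_prod', tsum_bool, tsum_pio_false, tsum_pio_true hp0,
    ← ENNReal.ofReal_add (by linarith) hp0, show 1 - p + p = 1 by ring, ENNReal.ofReal_one]

/-- probability of an event under the per-coordinate coupling weight -/
def mu0 (p : ℝ) (P : Bool × ℕ → Prop) : ℝ≥0∞ := ∑' a, pio p a * ind (P a)

lemma mu0_mono {P Q : Bool × ℕ → Prop} (h : ∀ a, P a → Q a) : mu0 p P ≤ mu0 p Q := by
  refine ENNReal.tsum_le_tsum (fun a => ?_)
  refine mul_le_mul_right ?_ _
  unfold ind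
  by_cases hP : P a
  · rw [if_pos hP, if_pos (h a hP)]
  · rw [if_neg hP]; exact zero_le

lemma mu0_add_compl (hp0 : 0 ≤ p) (hp1 : p ≤ 1) (P : Bool × ℕ → Prop) :
    mu0 p P + mu0 p (fun a => ¬ P a) = 1 := by
  unfold mu0
  rw [← ENNReal.tsum_add]
  rw [← tsum_pio_total hp0 hp1]
  refine tsum_congr (fun a => ?_)
  rw [← mul_add]
  unfold ind
  by_cases hP : P a <;> simp [hP]

/-- helper : from `a + c = 1` and `1 ≤ b + c`, conclude `a ≤ b`. -/
lemma le_of_add_compl {a b c : ℝ≥0∞} (h1 : a + c = 1) (h2 : 1 ≤ b + c) (hc : c ≠ ⊤) :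
    a ≤ b := by
  refine (ENNReal.add_le_add_iff_right hc).mp ?_
  rw [h1]
  exact h2

lemma mu0_pres_le (hp0 : 0 ≤ p) (hp1 : p ≤ 1) :
    mu0 p (fun a => a.1 = true) ≤ ENNReal.ofReal p := by
  have hcompl : mu0 p (fun a => ¬ (a.1 = true)) = ENNReal.ofReal (1-p) := by
    unfold mu0
    rw [tsum_eq_sum (s := {((false : Bool), (0 : ℕ))}) ?h]
    · simp [pio, ind]
    · intro a ha
      simp only [Finset.mem_singleton] at ha
      rcases a with ⟨b, m⟩
      cases b
      · match m with
        | 0 => exact absurd rfl ha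
        | Nat.succ m => simp [pio]
      · simp [ind]
  have h1 := mu0_add_compl hp0 hp1 (fun a => a.1 = true)
  rw [hcompl] at h1
  refine le_of_add_compl h1 ?_ ENNReal.ofReal_ne_top
  rw [← ENNReal.ofReal_add hp0 (by linarith), show p + (1-p) = 1 by ring, ENNReal.ofReal_one]

lemma mu0_bad_le (hp0 : 0 ≤ p) (hp1 : p ≤ 1) :
    mu0 p (fun a => a.1 = true ∧ a.2 ≠ 1) ≤ ENNReal.ofReal (p*p) := by
  have hcompl : mu0 p (fun a => ¬ (a.1 = true ∧ a.2 ≠ 1))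
      = ENNReal.ofReal (1-p) + ENNReal.ofReal (Real.exp (-p) * p) := by
    unfold mu0
    rw [tsum_eq_sum (s := {((false : Bool), (0 : ℕ)), ((true : Bool), (1 : ℕ))}) ?h]
    · rw [Finset.sum_insert (by simp), Finset.sum_singleton]
      have l1 : ind (¬((false, 0).1 = true ∧ (0:ℕ) ≠ 1)) = 1 := ind_of _ (by simp)
      have l2 : ind (¬((true, 1).1 = true ∧ (1:ℕ) ≠ 1)) = 1 := ind_of _ (by simp)
      show pio p (false, 0) * _ + pio p (true, 1) * _ = _
      rw [l1, l2]
      simp [pio, poisE, poisR]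
    · intro a ha
      simp only [Finset.mem_insert, Finset.mem_singleton] at ha
      push_neg at ha
      rcases a with ⟨b, m⟩
      cases b
      · match m with
        | 0 => exact absurd rfl ha.1
        | Nat.succ m => simp [pio]
      · have hm : m ≠ 1 := by
          intro h; exact ha.2 (by rw [h])
        rw [ind_of_not _ (by simp [hm])]
        simp
  have h1 := mu0_add_compl hp0 hp1 (fun a => a.1 = true ∧ a.2 ≠ 1)
  rw [hcompl] at h1
  refine le_of_add_compl h1 ?_
    (ENNReal.add_ne_top.mpr ⟨ENNReal.ofReal_ne_top, ENNReal.ofReal_ne_top⟩)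
  rw [← ENNReal.ofReal_add (by linarith) (by positivity),
    ← ENNReal.ofReal_add (by positivity)
      (by nlinarith [mul_nonneg (Real.exp_pos (-p)).le hp0]), ← ENNReal.ofReal_one]
  refine ENNReal.ofReal_le_ofReal ?_
  nlinarith [mul_le_mul_of_nonneg_left (one_sub_le_exp_neg (p := p)) hp0]

lemma mu0_null : mu0 p (fun a => a.1 = false ∧ 1 ≤ a.2) = 0 := by
  unfold mu0
  rw [← tsum_zero (β := Bool × ℕ)]
  refine tsum_congr (fun a => ?_)
  by_cases hP : a.1 = false ∧ 1 ≤ a.2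
  · have : pio p a = 0 := by
      rcases a with ⟨b, m⟩
      simp only at hP
      rw [hP.1]
      have : m ≠ 0 := by omega
      simp [pio, this]
    rw [this, zero_mul]
  · rw [ind_of_not _ hP, mul_zero]

end

end SA

namespace SA

noncomputable section

lemma ind_and (P Q : Prop) : ind (P ∧ Q) = ind P * ind Q := by
  unfold ind
  by_cases hP : P <;> by_cases hQ : Q <;> simp [hP, hQ]

/-- tsum of a product of coordinatewise weights over a function space factorizes. -/
lemma tsum_pi_prod {γ : Type} : ∀ {m : ℕ} (w : Fin m → γ → ℝ≥0∞),
    ∑' c : Fin m → γ, ∏ i, w i (c i) = ∏ i, ∑' a, w i a := by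
  intro m
  induction m with
  | zero =>
      intro w
      rw [tsum_eq_single (fun i => i.elim0)]
      · simp
      · intro c hc
        exact absurd (Subsingleton.elim c _) hc
  | succ n ih =>
      intro w
      rw [← Equiv.tsum_eq (Fin.consEquiv (fun _ : Fin (n+1) => γ)) (fun c => ∏ i, w i (c i))]
      have hterm : ∀ q : γ × (Fin n → γ),
          (∏ i, w i ((Fin.consEquiv (fun _ : Fin (n+1) => γ)) q i))
            = w 0 q.1 * ∏ i : Fin n, w i.succ (q.2 i) := by
        intro q
        simp [Fin.prod_univ_succ, Fin.consEquiv]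
      rw [tsum_congr hterm, ENNReal.tsum_prod']
      have hin : ∀ a : γ, ∑' t : Fin n → γ, w 0 a * ∏ i : Fin n, w i.succ (t i)
          = w 0 a * ∏ i : Fin n, ∑' b, w i.succ b := by
        intro a
        rw [ENNReal.tsum_mul_left, ih (fun i => w i.succ)]
      rw [tsum_congr hin, ENNReal.tsum_mul_right, Fin.prod_univ_succ]

lemma prod_split₁ {v : ℕ} (f : Fin v → ℝ≥0∞) (i : Fin v) :
    ∏ t, f t = f i * ∏ t ∈ univ.erase i, f t :=
  (Finset.mul_prod_erase univ f (mem_univ i)).symm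

lemma prod_split₂ {v : ℕ} (f : Fin v → ℝ≥0∞) {i j : Fin v} (hij : i ≠ j) :
    ∏ t, f t = f i * (f j * ∏ t ∈ (univ.erase i).erase j, f t) := by
  rw [prod_split₁ f i]
  congr 1
  exact (Finset.mul_prod_erase _ f (Finset.mem_erase.mpr ⟨Ne.symm hij, mem_univ j⟩)).symm

variable (p : ℝ) (v : ℕ)

/-- the joint coupling weight -/
def jointW (c : Fin v → Bool × ℕ) : ℝ≥0∞ := ∏ i, pio p (c i)

/-- mass of an event under the joint coupling -/
def mass (E : (Fin v → Bool × ℕ) → Prop) : ℝ≥0∞ := ∑' c, jointW p v c * ind (E c)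

variable {p v}

lemma tsum_jointW (hp0 : 0 ≤ p) (hp1 : p ≤ 1) : ∑' c, jointW p v c = 1 := by
  unfold jointW
  rw [tsum_pi_prod (fun _ a => pio p a)]
  rw [Finset.prod_congr rfl (fun i _ => tsum_pio_total hp0 hp1)]
  simp

lemma mass_mono {E F : (Fin v → Bool × ℕ) → Prop} (h : ∀ c, E c → F c) :
    mass p v E ≤ mass p v F := by
  refine ENNReal.tsum_le_tsum (fun c => mul_le_mul_right ?_ _)
  unfold ind
  by_cases hE : E c
  · rw [if_pos hE, if_pos (h c hE)]
  · rw [if_neg hE]; exact zero_le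

lemma mass_congr {E F : (Fin v → Bool × ℕ) → Prop} (h : ∀ c, E c ↔ F c) :
    mass p v E = mass p v F := by
  unfold mass
  exact tsum_congr (fun c => by rw [show E c = F c from propext (h c)])

/-- single-coordinate event mass -/
lemma mass_coord (hp0 : 0 ≤ p) (hp1 : p ≤ 1) (i : Fin v) (P : Bool × ℕ → Prop) :
    mass p v (fun c => P (c i)) = mu0 p P := by
  unfold mass jointW
  set W : Fin v → Bool × ℕ → ℝ≥0∞ :=
    Function.update (fun _ : Fin v => pio p) i (fun a => pio p a * ind (P a)) with hW
  have hWi : W i = fun a => pio p a * ind (P a) := Function.update_self _ _ _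
  have hWo : ∀ t : Fin v, t ≠ i → W t = pio p := fun t ht =>
    Function.update_of_ne ht _ _
  have hterm : ∀ c : Fin v → Bool × ℕ,
      (∏ j, pio p (c j)) * ind (P (c i)) = ∏ j, W j (c j) := by
    intro c
    rw [prod_split₁ (fun j => pio p (c j)) i, prod_split₁ (fun j => W j (c j)) i, hWi]
    have hprod : ∏ t ∈ univ.erase i, W t (c t) = ∏ t ∈ univ.erase i, pio p (c t) :=
      Finset.prod_congr rfl (fun t ht => by rw [hWo t (Finset.ne_of_mem_erase ht)])
    rw [hprod]
    ring
  rw [tsum_congr hterm, tsum_pi_prod, prod_split₁ (fun j => ∑' a, W j a) i, hWi]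
  have hprod : ∏ t ∈ univ.erase i, (∑' a, W t a) = ∏ _t ∈ univ.erase i, (1:ℝ≥0∞) :=
    Finset.prod_congr rfl (fun t ht => by
      rw [hWo t (Finset.ne_of_mem_erase ht)]; exact tsum_pio_total hp0 hp1)
  rw [hprod]
  simp [mu0]

/-- two-coordinate event mass -/
lemma mass_coord₂ (hp0 : 0 ≤ p) (hp1 : p ≤ 1) {i j : Fin v} (hij : i ≠ j)
    (P Q : Bool × ℕ → Prop) :
    mass p v (fun c => P (c i) ∧ Q (c j)) = mu0 p P * mu0 p Q := by
  unfold mass jointW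
  set W : Fin v → Bool × ℕ → ℝ≥0∞ :=
    Function.update (Function.update (fun _ : Fin v => pio p) j
      (fun a => pio p a * ind (Q a))) i (fun a => pio p a * ind (P a)) with hW
  have hWi : W i = fun a => pio p a * ind (P a) := Function.update_self _ _ _
  have hWj : W j = fun a => pio p a * ind (Q a) := by
    rw [hW, Function.update_of_ne (Ne.symm hij) _ _, Function.update_self]
  have hWo : ∀ t : Fin v, t ≠ i → t ≠ j → W t = pio p := fun t hti htj => by
    rw [hW, Function.update_of_ne hti, Function.update_of_ne htj]
  have hterm : ∀ c : Fin v → Bool × ℕ,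
      (∏ t, pio p (c t)) * ind (P (c i) ∧ Q (c j)) = ∏ t, W t (c t) := by
    intro c
    rw [ind_and, prod_split₂ (fun t => pio p (c t)) hij,
      prod_split₂ (fun t => W t (c t)) hij, hWi, hWj]
    have hprod : ∏ t ∈ (univ.erase i).erase j, W t (c t)
        = ∏ t ∈ (univ.erase i).erase j, pio p (c t) :=
      Finset.prod_congr rfl (fun t ht => by
        rw [hWo t (Finset.ne_of_mem_erase (Finset.mem_of_mem_erase ht))
          (Finset.ne_of_mem_erase ht)])
    rw [hprod]
    ring
  rw [tsum_congr hterm, tsum_pi_prod, prod_split₂ (fun t => ∑' a, W t a) hij, hWi, hWj]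
  have hprod : ∏ t ∈ (univ.erase i).erase j, (∑' a, W t a)
      = ∏ _t ∈ (univ.erase i).erase j, (1:ℝ≥0∞) :=
    Finset.prod_congr rfl (fun t ht => by
      rw [hWo t (Finset.ne_of_mem_erase (Finset.mem_of_mem_erase ht))
        (Finset.ne_of_mem_erase ht)]
      exact tsum_pio_total hp0 hp1)
  rw [hprod]
  simp [mu0, mul_assoc]

/-- marginalizing out the `ℕ` coordinates -/
lemma mass_comp_fst (g : (Fin v → Bool) → ℝ≥0∞) :
    ∑' c : Fin v → Bool × ℕ, jointW p v c * g (fun i => (c i).1)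
      = ∑' b : Fin v → Bool, (∏ i, ∑' m, pio p (b i, m)) * g b := by
  rw [← Equiv.tsum_eq (Equiv.arrowProdEquivProdArrow (Fin v) (fun _ => Bool) (fun _ => ℕ)).symm
    (fun c => jointW p v c * g (fun i => (c i).1)), ENNReal.tsum_prod']
  refine tsum_congr (fun b => ?_)
  show ∑' t : Fin v → ℕ, (∏ i, pio p (b i, t i)) * g b = _
  rw [ENNReal.tsum_mul_right]
  congr 1
  exact tsum_pi_prod (fun i m => pio p (b i, m))

/-- marginalizing out the `Bool` coordinates -/
lemma mass_comp_snd (g : (Fin v → ℕ) → ℝ≥0∞) (hp1 : p ≤ 1) :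
    ∑' c : Fin v → Bool × ℕ, jointW p v c * g (fun i => (c i).2)
      = ∑' t : Fin v → ℕ, (∏ i, poisE p (t i)) * g t := by
  rw [← Equiv.tsum_eq (Equiv.arrowProdEquivProdArrow (Fin v) (fun _ => Bool) (fun _ => ℕ)).symm
    (fun c => jointW p v c * g (fun i => (c i).2)), ENNReal.tsum_prod', ENNReal.tsum_comm]
  refine tsum_congr (fun t => ?_)
  show ∑' b : Fin v → Bool, (∏ i, pio p (b i, t i)) * g t = _
  rw [ENNReal.tsum_mul_right]
  congr 1
  rw [tsum_pi_prod (fun i (b : Bool) => pio p (b, t i))]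
  exact Finset.prod_congr rfl (fun i _ => tsum_pio_bool hp1 (t i))

end

end SA

namespace SA

noncomputable section

variable (G : FinGraph)

/-- law map for vertex subsets -/
def FS (S : Finset (Fin G.n)) : UGraph := ((G.induce S).core).cls

/-- law map for multiplicity vectors -/
def PhiN (N : Fin G.n → ℕ) : UGraph :=
  ((seqGraph G (repL G.n N).length (repL G.n N).get).core).cls

variable {G}

lemma Phi_eq_of_cnt {k : ℕ} (x : Fin k → Fin G.n) :
    ((seqGraph G k x).core).cls = PhiN G (cnt x) :=
  cls_core_eq (seq_iso_of_cnt (cnt_repL G.n (cnt x)).symm)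

/-- the kept-vertex set of a coupling configuration -/
def Scoord {v : ℕ} (c : Fin v → Bool × ℕ) : Finset (Fin v) :=
  univ.filter (fun i => (c i).1 = true)

/-- the multiplicity vector of a coupling configuration -/
def Ncoord {v : ℕ} (c : Fin v → Bool × ℕ) : Fin v → ℕ := fun i => (c i).2

/-- the good coupling event -/
def GoodC (G : FinGraph) (c : Fin G.n → Bool × ℕ) : Prop :=
  (∀ i, 1 ≤ (c i).2 → (c i).1 = true) ∧
  (∀ i j, G.adj i j = true → (c i).1 = true → (c j).1 = true →
    ((c i).2 = 1 ∧ (c j).2 = 1))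

/-- On the good event, the two samplings produce the same unlabeled graph. -/
lemma FS_eq_PhiN {c : Fin G.n → Bool × ℕ} (hc : GoodC G c) :
    FS G (Scoord c) = PhiN G (Ncoord c) := by
  classical
  set S := Scoord c with hS
  set N := Ncoord c with hN
  set L := repL G.n N with hL
  set x : Fin L.length → Fin G.n := L.get with hx
  have hcnt : cnt x = N := cnt_repL G.n N
  have mem_S : ∀ i, i ∈ S ↔ (c i).1 = true := by
    intro i; simp [hS, Scoord]
  have f1 : ∀ i, 1 ≤ N i → i ∈ S := fun i hi => (mem_S i).mpr (hc.1 i hi)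
  have f2 : ∀ i j, G.adj i j = true → i ∈ S → j ∈ S → (N i = 1 ∧ N j = 1) :=
    fun i j hadj hi hj => hc.2 i j hadj ((mem_S i).mp hi) ((mem_S j).mp hj)
  have key : ∀ q, (q ∈ S ∧ ∃ r, r ∈ S ∧ G.adj q r = true)
      ↔ (1 ≤ N q ∧ ∃ r, 1 ≤ N r ∧ G.adj q r = true) := by
    intro q
    constructor
    · rintro ⟨hq, r, hr, hadj⟩
      obtain ⟨h1, h2⟩ := f2 q r hadj hq hr
      exact ⟨by omega, r, by omega, hadj⟩
    · rintro ⟨hq1, r, hr1, hadj⟩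
      exact ⟨f1 q hq1, r, f1 r hr1, hadj⟩
  have hpos : ∀ a : Fin L.length, 1 ≤ N (x a) := by
    intro a
    rw [← hcnt]
    have : a ∈ (univ : Finset (Fin L.length)).filter (fun j => x j = x a) := by simp
    have hcard := Finset.card_pos.mpr ⟨a, this⟩
    exact hcard
  let oS := S.orderIsoOfFin rfl
  let ψ : {a : Fin L.length // ∃ b, G.adj (x a) (x b) = true}
      → {q : Fin G.n // 1 ≤ N q ∧ ∃ r, 1 ≤ N r ∧ G.adj q r = true} :=
    fun a => ⟨x a.1, hpos a.1, a.2.elim (fun b hb => ⟨x b, hpos b, hb⟩)⟩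
  have hinj : Function.Injective ψ := by
    rintro ⟨a, ha⟩ ⟨a', ha'⟩ hval
    have hxv : x a = x a' := congrArg Subtype.val hval
    refine Subtype.ext ?_
    by_contra hne
    have hne' : a ≠ a' := fun h => hne (by simpa using h)
    have h2le : 2 ≤ cnt x (x a) := by
      have : 1 < ((univ : Finset (Fin L.length)).filter (fun j => x j = x a)).card := by
        refine Finset.one_lt_card.mpr ⟨a, by simp, a', by simp [hxv], hne'⟩
      exact this
    obtain ⟨b, hb⟩ := ha
    have hNa : N (x a) = 1 := by
      obtain ⟨h1, _⟩ := f2 (x a) (x b) hb (f1 _ (hpos a)) (f1 _ (hpos b))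
      exact h1
    rw [hcnt] at h2le
    omega
  have hsurj : Function.Surjective ψ := by
    rintro ⟨q, hq1, r, hr1, hadj⟩
    have hq' : 0 < cnt x q := by rw [hcnt]; omega
    have hr' : 0 < cnt x r := by rw [hcnt]; omega
    obtain ⟨a, ha⟩ := Finset.card_pos.mp hq'
    obtain ⟨b, hb⟩ := Finset.card_pos.mp hr'
    have hxa : x a = q := (Finset.mem_filter.mp ha).2
    have hxb : x b = r := (Finset.mem_filter.mp hb).2
    refine ⟨⟨a, ⟨b, by rw [hxa, hxb]; exact hadj⟩⟩, ?_⟩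
    exact Subtype.ext hxa
  let e₅ : {q : Fin G.n // 1 ≤ N q ∧ ∃ r, 1 ≤ N r ∧ G.adj q r = true}
      ≃ {a : Fin L.length // ∃ b, G.adj (x a) (x b) = true} :=
    (Equiv.ofBijective ψ ⟨hinj, hsurj⟩).symm
  have he₅ : ∀ w, x ((e₅ w) : Fin L.length) = w.1 := by
    intro w
    exact congrArg Subtype.val ((Equiv.ofBijective ψ ⟨hinj, hsurj⟩).apply_symm_apply w)
  let e₁ : {a : Fin (G.induce S).n // ∃ b, (G.induce S).adj a b = true}
      ≃ {s : {q // q ∈ S} // ∃ b : Fin (G.induce S).n, G.adj s.1 (oS b).1 = true} :=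
    Equiv.subtypeEquiv oS.toEquiv (fun a => Iff.rfl)
  let e₂ : {s : {q // q ∈ S} // ∃ b : Fin (G.induce S).n, G.adj s.1 (oS b).1 = true}
      ≃ {s : {q // q ∈ S} // ∃ r, r ∈ S ∧ G.adj s.1 r = true} :=
    Equiv.subtypeEquivRight (fun s => by
      constructor
      · rintro ⟨b, hb⟩
        exact ⟨(oS b).1, (oS b).2, hb⟩
      · rintro ⟨r, hr, hadj⟩
        refine ⟨oS.symm ⟨r, hr⟩, ?_⟩
        rw [OrderIso.apply_symm_apply]
        exact hadj)
  let e₃ : {s : {q // q ∈ S} // ∃ r, r ∈ S ∧ G.adj s.1 r = true}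
      ≃ {q : Fin G.n // q ∈ S ∧ ∃ r, r ∈ S ∧ G.adj q r = true} :=
    Equiv.subtypeSubtypeEquivSubtypeInter (fun q : Fin G.n => q ∈ S) (fun q => ∃ r, r ∈ S ∧ G.adj q r = true)
  let e₄ : {q : Fin G.n // q ∈ S ∧ ∃ r, r ∈ S ∧ G.adj q r = true}
      ≃ {q : Fin G.n // 1 ≤ N q ∧ ∃ r, 1 ≤ N r ∧ G.adj q r = true} :=
    Equiv.subtypeEquivRight key
  let e := e₁.trans (e₂.trans (e₃.trans (e₄.trans e₅)))
  have hval : ∀ a, x ((e a) : Fin L.length) = (oS a.1).1 := by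
    intro a
    exact he₅ (e₄ (e₃ (e₂ (e₁ a))))
  refine Quot.sound (iso_core_of_equiv e ?_)
  intro a b
  show G.adj (oS a.1).1 (oS b.1).1 = G.adj (x ((e a) : Fin L.length)) (x ((e b) : Fin L.length))
  rw [hval a, hval b]

end

end SA

namespace SA

noncomputable section

variable {G : FinGraph} {p : ℝ}

lemma ofReal_ite (P : Prop) [Decidable P] :
    ENNReal.ofReal (if P then (1:ℝ) else 0) = ind P := by
  unfold ind
  split <;> simp_all

/-- Law of p-sampling as a coupling marginal. -/
lemma lemA (hp0 : 0 ≤ p) (hp1 : p ≤ 1) (H : UGraph) :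
    ENNReal.ofReal (pSampleLaw G p H)
      = mass p G.n (fun c => FS G (Scoord c) = H) := by
  classical
  have h1 : mass p G.n (fun c => FS G (Scoord c) = H)
      = ∑' b : Fin G.n → Bool, (∏ i, ∑' m, pio p (b i, m))
          * ind (FS G (univ.filter (fun i => b i = true)) = H) :=
    mass_comp_fst (g := fun b => ind (FS G (univ.filter (fun i => b i = true)) = H))
  rw [h1, tsum_fintype]
  rw [pSampleLaw, ENNReal.ofReal_sum_of_nonneg (fun S _ => by
    have h2 : 0 ≤ sampleWeight G p S := by
      unfold sampleWeight
      exact mul_nonneg (pow_nonneg (le_min hp0 zero_le_one) _)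
        (pow_nonneg (by have := min_le_right p 1; linarith) _)
    exact mul_nonneg h2 (by split <;> norm_num))]
  refine Finset.sum_nbij' (i := fun (S : Finset (Fin G.n)) => fun t => decide (t ∈ S))
    (j := fun b => univ.filter (fun t => b t = true)) (fun S _ => mem_univ _)
    (fun b _ => Finset.mem_powerset.mpr (Finset.subset_univ _)) ?_ ?_ ?_
  · intro S _
    ext t
    simp
  · intro b _
    funext t
    simp
  · intro S _
    have hfilter : univ.filter (fun t => decide (t ∈ S) = true) = S := by
      ext t; simp
    have hprod : (∏ i, ∑' m, pio p ((decide (i ∈ S)), m))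
        = ENNReal.ofReal p ^ S.card * ENNReal.ofReal (1-p) ^ (G.n - S.card) := by
      have hpt : ∀ i : Fin G.n, (∑' m, pio p ((decide (i ∈ S)), m))
          = if i ∈ S then ENNReal.ofReal p else ENNReal.ofReal (1-p) := by
        intro i
        by_cases hi : i ∈ S
        · simp [hi, tsum_pio_true hp0]
        · simp [hi, tsum_pio_false]
      rw [Finset.prod_congr rfl (fun i _ => hpt i), Finset.prod_ite, Finset.prod_const,
        Finset.prod_const]
      have hc1 : (univ.filter (fun i => i ∈ S)).card = S.card := by
        congr 1
        ext t; simp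
      have hc2 : (univ.filter (fun i => ¬ i ∈ S)).card = G.n - S.card := by
        have : univ.filter (fun i => ¬ i ∈ S) = univ \ S := by ext t; simp
        rw [this, Finset.card_sdiff_of_subset (Finset.subset_univ _), Finset.card_univ,
          Fintype.card_fin]
      rw [hc1, hc2]
    have hweight : ENNReal.ofReal (sampleWeight G p S)
        = ENNReal.ofReal p ^ S.card * ENNReal.ofReal (1-p) ^ (G.n - S.card) := by
      unfold sampleWeight
      rw [min_eq_left hp1, ENNReal.ofReal_mul (by positivity), ENNReal.ofReal_pow hp0,
        ENNReal.ofReal_pow (by linarith)]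
    rw [ENNReal.ofReal_mul (by
      unfold sampleWeight
      exact mul_nonneg (pow_nonneg (le_min hp0 zero_le_one) _)
        (pow_nonneg (by have := min_le_right p 1; linarith) _)), hweight, hprod, hfilter,
      ofReal_ite]
    rfl

/-- the `k`-th summand of `wrSampleLaw`, rewritten over `piAntidiag`. -/
lemma perK (hp0 : 0 ≤ p) (hv : 0 < G.n) (H : UGraph) (k : ℕ) :
    (Real.exp (-(p * (G.v : ℝ))) * (p * (G.v : ℝ)) ^ k / (Nat.factorial k : ℝ)) *
      ((((univ : Finset (Fin k → Fin G.n)).filter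
          (fun x => ((seqGraph G k x).core).cls = H)).card : ℝ) / ((G.v : ℝ)) ^ k)
    = ∑ N ∈ Finset.piAntidiag (univ : Finset (Fin G.n)) k,
        (∏ i, poisR p (N i)) * (if PhiN G N = H then (1:ℝ) else 0) := by
  classical
  set A : ℝ := Real.exp (-(p * (G.v : ℝ))) * (p * (G.v : ℝ)) ^ k / (Nat.factorial k : ℝ)
    with hA
  have hcount : ((((univ : Finset (Fin k → Fin G.n)).filter
      (fun x => ((seqGraph G k x).core).cls = H)).card : ℝ))
      = ∑ x : Fin k → Fin G.n, (if PhiN G (cnt x) = H then (1:ℝ) else 0) := by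
    rw [Finset.card_filter]
    push_cast
    refine Finset.sum_congr rfl (fun x _ => ?_)
    rw [Phi_eq_of_cnt x]
  have hstep : A * ((((univ : Finset (Fin k → Fin G.n)).filter
      (fun x => ((seqGraph G k x).core).cls = H)).card : ℝ) / ((G.v : ℝ)) ^ k)
      = ∑ x : Fin k → Fin G.n,
          (fun N => (A / ((G.v : ℝ)) ^ k) * (if PhiN G N = H then (1:ℝ) else 0)) (cnt x) := by
    rw [hcount, Finset.sum_div, Finset.mul_sum]
    exact Finset.sum_congr rfl (fun x _ => by ring)
  rw [hstep, Finset.sum_comp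
    (fun N => (A / ((G.v : ℝ)) ^ k) * (if PhiN G N = H then (1:ℝ) else 0))
    (fun x : Fin k → Fin G.n => cnt x)]
  have himage : Finset.image (fun x : Fin k → Fin G.n => cnt x) univ
      = Finset.piAntidiag (univ : Finset (Fin G.n)) k := by
    ext N
    rw [Finset.mem_image, Finset.mem_piAntidiag]
    constructor
    · rintro ⟨x, _, hx⟩
      exact ⟨by rw [← hx]; exact sum_cnt x, fun i _ => mem_univ i⟩
    · rintro ⟨hN, -⟩
      exact ⟨(repL G.n N).get ∘ ⇑(finCongr (by rw [length_repL, hN] : k = (repL G.n N).length)),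
        mem_univ _, by rw [cnt_comp, cnt_repL]⟩
  rw [himage]
  refine Finset.sum_congr rfl (fun N hN => ?_)
  have hsum : ∑ i, N i = k := (Finset.mem_piAntidiag.mp hN).1
  have hvR : (0:ℝ) < (G.v : ℝ) := by
    simp only [FinGraph.v]
    exact_mod_cast hv
  have hfacne : (0:ℝ) < ∏ i, (Nat.factorial (N i) : ℝ) := by positivity
  have hfibR : ((((univ : Finset (Fin k → Fin G.n)).filter (fun x => cnt x = N)).card : ℝ))
      = (Nat.factorial k : ℝ) / ∏ i, (Nat.factorial (N i) : ℝ) := by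
    rw [eq_div_iff (ne_of_gt hfacne)]
    exact_mod_cast congrArg (Nat.cast : ℕ → ℝ) (card_cnt_fiber_mul N hsum)
  have hprodpois : (∏ i, poisR p (N i))
      = Real.exp (-(p * (G.v : ℝ))) * p ^ k / ∏ i, (Nat.factorial (N i) : ℝ) := by
    unfold poisR
    rw [Finset.prod_div_distrib, Finset.prod_mul_distrib, Finset.prod_pow_eq_pow_sum, hsum,
      Finset.prod_const]
    congr 2
    rw [← Real.exp_nat_mul]
    congr 1
    simp only [FinGraph.v, Finset.card_univ, Fintype.card_fin]
    ring
  have hkey : ((((univ : Finset (Fin k → Fin G.n)).filter (fun x => cnt x = N)).card : ℝ))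
      * (A / ((G.v : ℝ)) ^ k) = ∏ i, poisR p (N i) := by
    rw [hfibR, hprodpois, hA, mul_pow]
    have hkfac : (0:ℝ) < (Nat.factorial k : ℝ) := by positivity
    field_simp
  rw [nsmul_eq_mul, ← mul_assoc, hkey]

/-- Law of with-replacement p-sampling as a coupling marginal. -/
lemma lemB (hp0 : 0 ≤ p) (hp1 : p ≤ 1) (hv : 0 < G.n) (H : UGraph) :
    ENNReal.ofReal (wrSampleLaw G p H)
      = mass p G.n (fun c => PhiN G (Ncoord c) = H) := by
  classical
  have hmass : mass p G.n (fun c => PhiN G (Ncoord c) = H)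
      = ∑' t : Fin G.n → ℕ, (∏ i, poisE p (t i)) * ind (PhiN G t = H) :=
    mass_comp_snd (g := fun t => ind (PhiN G t = H)) hp1
  have hvR : (0:ℝ) < (G.v : ℝ) := by
    simp only [FinGraph.v]
    exact_mod_cast hv
  set F : ℕ → ℝ := fun k =>
    (Real.exp (-(p * (G.v : ℝ))) * (p * (G.v : ℝ)) ^ k / (Nat.factorial k : ℝ)) *
      ((((univ : Finset (Fin k → Fin G.n)).filter
          (fun x => ((seqGraph G k x).core).cls = H)).card : ℝ) / ((G.v : ℝ)) ^ k) with hF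
  have hnnF : ∀ k, 0 ≤ F k := by
    intro k
    rw [hF]
    positivity
  have hleF : ∀ k, F k ≤ poisR (p * (G.v : ℝ)) k := by
    intro k
    rw [hF]
    unfold poisR
    have h1 : ((((univ : Finset (Fin k → Fin G.n)).filter
        (fun x => ((seqGraph G k x).core).cls = H)).card : ℝ) / ((G.v : ℝ)) ^ k) ≤ 1 := by
      rw [div_le_one (by positivity)]
      have hle : (((univ : Finset (Fin k → Fin G.n)).filter
          (fun x => ((seqGraph G k x).core).cls = H)).card)
          ≤ Fintype.card (Fin k → Fin G.n) := by
        rw [← Finset.card_univ]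
        exact Finset.card_filter_le _ _
      rw [Fintype.card_fun, Fintype.card_fin, Fintype.card_fin] at hle
      calc ((((univ : Finset (Fin k → Fin G.n)).filter
          (fun x => ((seqGraph G k x).core).cls = H)).card : ℝ)) ≤ ((G.n ^ k : ℕ) : ℝ) := by
            exact_mod_cast hle
        _ = ((G.v : ℝ)) ^ k := by
            simp [FinGraph.v]
    calc F k ≤ (Real.exp (-(p * (G.v : ℝ))) * (p * (G.v : ℝ)) ^ k / (Nat.factorial k : ℝ)) * 1 := by
          rw [hF]
          refine mul_le_mul_of_nonneg_left h1 (by positivity)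
      _ = _ := by rw [mul_one]
  have hsumF : Summable F :=
    Summable.of_nonneg_of_le hnnF hleF (summable_poisR (by positivity))
  rw [wrSampleLaw, ENNReal.ofReal_tsum_of_nonneg hnnF hsumF]
  have hterm : ∀ k, ENNReal.ofReal (F k)
      = ∑ N ∈ Finset.piAntidiag (univ : Finset (Fin G.n)) k,
          (∏ i, poisE p (N i)) * ind (PhiN G N = H) := by
    intro k
    simp only [hF]
    rw [perK hp0 hv H k, ENNReal.ofReal_sum_of_nonneg (fun N _ =>
      mul_nonneg (Finset.prod_nonneg (fun i _ => poisR_nonneg hp0 _)) (by positivity))]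
    refine Finset.sum_congr rfl (fun N _ => ?_)
    rw [ENNReal.ofReal_mul (Finset.prod_nonneg (fun i _ => poisR_nonneg hp0 _)),
      ENNReal.ofReal_prod_of_nonneg (fun i _ => poisR_nonneg hp0 _), ofReal_ite]
    rfl
  rw [tsum_congr hterm, hmass]
  have hexp : ∀ t : Fin G.n → ℕ, (∏ i, poisE p (t i)) * ind (PhiN G t = H)
      = ∑' k : ℕ, (if k = ∑ i, t i then (∏ i, poisE p (t i)) * ind (PhiN G t = H) else 0) :=
    fun t => (tsum_ite_eq (∑ i, t i) (fun _ => (∏ i, poisE p (t i)) * ind (PhiN G t = H))).symm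
  rw [tsum_congr hexp, ENNReal.tsum_comm]
  refine tsum_congr (fun k => ?_)
  rw [tsum_eq_sum (s := Finset.piAntidiag (univ : Finset (Fin G.n)) k) (fun t ht => by
    rw [if_neg]
    intro hk
    exact ht (Finset.mem_piAntidiag.mpr ⟨hk.symm, fun i _ => mem_univ i⟩))]
  refine Finset.sum_congr rfl (fun N hN => ?_)
  rw [if_pos ((Finset.mem_piAntidiag.mp hN).1.symm)]

end

end SA

namespace SA

noncomputable section

variable {G : FinGraph} {p : ℝ}

/-- bad per-coordinate event: kept but not exactly one copy -/
def bad1 (a : Bool × ℕ) : Prop := a.1 = true ∧ a.2 ≠ 1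

/-- kept -/
def presB (a : Bool × ℕ) : Prop := a.1 = true

/-- null event -/
def nullB (a : Bool × ℕ) : Prop := a.1 = false ∧ 1 ≤ a.2

lemma mass_bad_le (hp0 : 0 ≤ p) (hp1 : p ≤ 1) :
    mass p G.n (fun c => ¬ GoodC G c)
      ≤ ENNReal.ofReal (2 * (G.e : ℝ) * p ^ 3 + (G.loops : ℝ) * p ^ 2) := by
  classical
  set edgeF := ((univ : Finset (Fin G.n × Fin G.n)).filter
    (fun q => G.adj q.1 q.2 = true ∧ q.1 < q.2)) with hedgeF
  set loopF := ((univ : Finset (Fin G.n)).filter (fun i => G.adj i i = true)) with hloopF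
  set X : (Fin G.n → Bool × ℕ) → ℝ≥0∞ := fun c => ∑ q ∈ edgeF,
    (ind (presB (c q.1) ∧ bad1 (c q.2)) + ind (presB (c q.2) ∧ bad1 (c q.1))) with hX
  set Y : (Fin G.n → Bool × ℕ) → ℝ≥0∞ := fun c => ∑ i ∈ loopF, ind (bad1 (c i)) with hY
  set Z : (Fin G.n → Bool × ℕ) → ℝ≥0∞ := fun c => ∑ i : Fin G.n, ind (nullB (c i)) with hZ
  have pointwise : ∀ c, ind (¬ GoodC G c) ≤ X c + (Y c + Z c) := by
    intro c
    by_cases hg : GoodC G c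
    · rw [ind_of_not _ (not_not_intro hg)]
      exact zero_le
    · refine le_trans (ind_le_one _) ?_
      rcases not_and_or.mp hg with h1 | h2
      · push_neg at h1
        obtain ⟨i, hi1, hi2⟩ := h1
        simp only [Bool.not_eq_true] at hi2
        have hterm : (1:ℝ≥0∞) = ind (nullB (c i)) := (ind_of _ ⟨hi2, hi1⟩).symm
        have hZ1 : (1:ℝ≥0∞) ≤ Z c := by
          rw [hterm]
          show ind (nullB (c i)) ≤ ∑ t : Fin G.n, ind (nullB (c t))
          exact Finset.single_le_sum (f := fun t => ind (nullB (c t)))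
            (fun _ _ => zero_le) (mem_univ i)
        calc (1:ℝ≥0∞) ≤ Z c := hZ1
          _ ≤ Y c + Z c := le_add_self
          _ ≤ X c + (Y c + Z c) := le_add_self
      · push_neg at h2
        obtain ⟨i, j, hadj, hpi, hpj, hni⟩ := h2
        by_cases hij : i = j
        · subst hij
          have hmem : i ∈ loopF := by
            rw [hloopF, Finset.mem_filter]
            exact ⟨mem_univ _, hadj⟩
          have h1le : (1:ℝ≥0∞) ≤ Y c := by
            rw [show (1:ℝ≥0∞) = ind (bad1 (c i)) from (ind_of _ ⟨hpi, fun h => (hni h) h⟩).symm]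
            show ind (bad1 (c i)) ≤ ∑ t ∈ loopF, ind (bad1 (c t))
            exact Finset.single_le_sum (f := fun t => ind (bad1 (c t)))
              (fun _ _ => zero_le) hmem
          calc (1:ℝ≥0∞) ≤ Y c := h1le
            _ ≤ Y c + Z c := le_self_add
            _ ≤ X c + (Y c + Z c) := le_add_self
        · have hcases : (c i).2 ≠ 1 ∨ (c j).2 ≠ 1 := by
            by_cases h' : (c i).2 = 1
            · exact Or.inr (hni h')
            · exact Or.inl h'
          have hXge : (1:ℝ≥0∞) ≤ X c := by
            rcases lt_or_gt_of_ne (fun h => hij h) with hlt | hgt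
            · have hmem : (i, j) ∈ edgeF := by
                rw [hedgeF, Finset.mem_filter]
                exact ⟨mem_univ _, hadj, hlt⟩
              have hone : (1:ℝ≥0∞) ≤ ind (presB (c i) ∧ bad1 (c j))
                  + ind (presB (c j) ∧ bad1 (c i)) := by
                rcases hcases with hni' | hnj'
                · rw [show ind (presB (c j) ∧ bad1 (c i)) = 1 from ind_of _ ⟨hpj, hpi, hni'⟩]
                  exact le_add_self
                · rw [show ind (presB (c i) ∧ bad1 (c j)) = 1 from ind_of _ ⟨hpi, hpj, hnj'⟩]
                  exact le_self_add
              refine le_trans hone ?_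
              show ind (presB (c (i,j).1) ∧ bad1 (c (i,j).2))
                  + ind (presB (c (i,j).2) ∧ bad1 (c (i,j).1)) ≤ X c
              exact Finset.single_le_sum
                (f := fun q => ind (presB (c q.1) ∧ bad1 (c q.2))
                  + ind (presB (c q.2) ∧ bad1 (c q.1))) (fun _ _ => zero_le) hmem
            · have hmem : (j, i) ∈ edgeF := by
                rw [hedgeF, Finset.mem_filter]
                exact ⟨mem_univ _, by rw [G.symm]; exact hadj, hgt⟩
              have hone : (1:ℝ≥0∞) ≤ ind (presB (c j) ∧ bad1 (c i))
                  + ind (presB (c i) ∧ bad1 (c j)) := by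
                rcases hcases with hni' | hnj'
                · rw [show ind (presB (c j) ∧ bad1 (c i)) = 1 from ind_of _ ⟨hpj, hpi, hni'⟩]
                  exact le_self_add
                · rw [show ind (presB (c i) ∧ bad1 (c j)) = 1 from ind_of _ ⟨hpi, hpj, hnj'⟩]
                  exact le_add_self
              refine le_trans hone ?_
              show ind (presB (c (j,i).1) ∧ bad1 (c (j,i).2))
                  + ind (presB (c (j,i).2) ∧ bad1 (c (j,i).1)) ≤ X c
              exact Finset.single_le_sum
                (f := fun q => ind (presB (c q.1) ∧ bad1 (c q.2))
                  + ind (presB (c q.2) ∧ bad1 (c q.1))) (fun _ _ => zero_le) hmem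
          exact le_trans hXge le_self_add
  have step1 : mass p G.n (fun c => ¬ GoodC G c)
      ≤ (∑' c, jointW p G.n c * X c)
        + ((∑' c, jointW p G.n c * Y c) + (∑' c, jointW p G.n c * Z c)) := by
    rw [← ENNReal.tsum_add, ← ENNReal.tsum_add]
    refine ENNReal.tsum_le_tsum (fun c => ?_)
    rw [← mul_add, ← mul_add]
    exact mul_le_mul_right (pointwise c) _
  have hXbound : (∑' c, jointW p G.n c * X c)
      ≤ (G.e : ℝ≥0∞) * (2 * (ENNReal.ofReal p * ENNReal.ofReal (p*p))) := by
    have hsplit : (∑' c, jointW p G.n c * X c) = ∑ q ∈ edgeF,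
        (mass p G.n (fun c => presB (c q.1) ∧ bad1 (c q.2))
          + mass p G.n (fun c => presB (c q.2) ∧ bad1 (c q.1))) := by
      rw [tsum_congr (fun c => by rw [hX, Finset.mul_sum]),
        Summable.tsum_finsetSum (fun q _ => ENNReal.summable)]
      refine Finset.sum_congr rfl (fun q _ => ?_)
      rw [tsum_congr (fun c => mul_add (jointW p G.n c) _ _), ENNReal.tsum_add]
      rfl
    rw [hsplit]
    have hper : ∀ q ∈ edgeF,
        (mass p G.n (fun c => presB (c q.1) ∧ bad1 (c q.2))
          + mass p G.n (fun c => presB (c q.2) ∧ bad1 (c q.1)))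
        ≤ 2 * (ENNReal.ofReal p * ENNReal.ofReal (p*p)) := by
      intro q hq
      have hne : q.1 ≠ q.2 := ne_of_lt (Finset.mem_filter.mp hq).2.2
      have h1 : mass p G.n (fun c => presB (c q.1) ∧ bad1 (c q.2))
          ≤ ENNReal.ofReal p * ENNReal.ofReal (p*p) := by
        rw [mass_coord₂ hp0 hp1 hne presB bad1]
        exact mul_le_mul' (mu0_pres_le hp0 hp1) (mu0_bad_le hp0 hp1)
      have h2 : mass p G.n (fun c => presB (c q.2) ∧ bad1 (c q.1))
          ≤ ENNReal.ofReal p * ENNReal.ofReal (p*p) := by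
        rw [mass_coord₂ hp0 hp1 (Ne.symm hne) presB bad1]
        exact mul_le_mul' (mu0_pres_le hp0 hp1) (mu0_bad_le hp0 hp1)
      calc _ ≤ ENNReal.ofReal p * ENNReal.ofReal (p*p)
            + ENNReal.ofReal p * ENNReal.ofReal (p*p) := add_le_add h1 h2
        _ = 2 * (ENNReal.ofReal p * ENNReal.ofReal (p*p)) := by ring
    calc ∑ q ∈ edgeF, _ ≤ edgeF.card • (2 * (ENNReal.ofReal p * ENNReal.ofReal (p*p))) :=
          Finset.sum_le_card_nsmul _ _ _ hper
      _ = (G.e : ℝ≥0∞) * (2 * (ENNReal.ofReal p * ENNReal.ofReal (p*p))) := by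
          rw [nsmul_eq_mul]
          rfl
  have hYbound : (∑' c, jointW p G.n c * Y c)
      ≤ (G.loops : ℝ≥0∞) * ENNReal.ofReal (p*p) := by
    have hsplit : (∑' c, jointW p G.n c * Y c) = ∑ i ∈ loopF,
        mass p G.n (fun c => bad1 (c i)) := by
      rw [tsum_congr (fun c => by rw [hY, Finset.mul_sum]),
        Summable.tsum_finsetSum (fun i _ => ENNReal.summable)]
      rfl
    rw [hsplit]
    have hper : ∀ i ∈ loopF, mass p G.n (fun c => bad1 (c i)) ≤ ENNReal.ofReal (p*p) := by
      intro i _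
      rw [mass_coord hp0 hp1 i bad1]
      exact mu0_bad_le hp0 hp1
    calc ∑ i ∈ loopF, _ ≤ loopF.card • ENNReal.ofReal (p*p) :=
          Finset.sum_le_card_nsmul _ _ _ hper
      _ = (G.loops : ℝ≥0∞) * ENNReal.ofReal (p*p) := by
          rw [nsmul_eq_mul]
          rfl
  have hZbound : (∑' c, jointW p G.n c * Z c) = 0 := by
    have hsplit : (∑' c, jointW p G.n c * Z c) = ∑ i : Fin G.n,
        mass p G.n (fun c => nullB (c i)) := by
      rw [tsum_congr (fun c => by rw [hZ, Finset.mul_sum]),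
        Summable.tsum_finsetSum (fun i _ => ENNReal.summable)]
      rfl
    rw [hsplit]
    refine Finset.sum_eq_zero (fun i _ => ?_)
    rw [mass_coord hp0 hp1 i nullB]
    exact mu0_null
  calc mass p G.n (fun c => ¬ GoodC G c)
      ≤ _ := step1
    _ ≤ (G.e : ℝ≥0∞) * (2 * (ENNReal.ofReal p * ENNReal.ofReal (p*p)))
        + ((G.loops : ℝ≥0∞) * ENNReal.ofReal (p*p) + 0) :=
        add_le_add hXbound (add_le_add hYbound (le_of_eq hZbound))
    _ = ENNReal.ofReal (2 * (G.e : ℝ) * p ^ 3 + (G.loops : ℝ) * p ^ 2) := by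
        have hA : ((G.e : ℝ≥0∞)) * (2 * (ENNReal.ofReal p * ENNReal.ofReal (p*p)))
            = ENNReal.ofReal ((G.e : ℝ) * (2 * (p * (p * p)))) := by
          rw [ENNReal.ofReal_mul (Nat.cast_nonneg _), ENNReal.ofReal_natCast,
            ENNReal.ofReal_mul (by norm_num : (0:ℝ) ≤ 2), ENNReal.ofReal_mul hp0,
            ENNReal.ofReal_ofNat, ENNReal.ofReal_mul hp0, ENNReal.ofReal_mul hp0]
        have hB : ((G.loops : ℝ≥0∞)) * ENNReal.ofReal (p*p)
            = ENNReal.ofReal ((G.loops : ℝ) * (p*p)) := by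
          rw [ENNReal.ofReal_mul (Nat.cast_nonneg _), ENNReal.ofReal_natCast]
        rw [add_zero, hA, hB, ← ENNReal.ofReal_add (by positivity) (by positivity)]
        congr 1
        ring

end

end SA

namespace SA

noncomputable section

variable {G : FinGraph} {p : ℝ}

lemma tsum_ind_mem (u : UGraph) (A : Set UGraph) :
    ∑' (H : A), ind (u = ↑H) = ind (u ∈ A) := by
  by_cases h : u ∈ A
  · rw [ind_of _ h, tsum_eq_single (⟨u, h⟩ : A) (fun H hne => ind_of_not _
      (fun he => hne (Subtype.ext he.symm)))]
    exact ind_of _ rfl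
  · rw [ind_of_not _ h, tsum_congr (fun H : A => ind_of_not (u = ↑H)
      (fun he => h (he ▸ H.2))), tsum_zero]

lemma tsum_mass_eq {v : ℕ} (p : ℝ) (Φ : (Fin v → Bool × ℕ) → UGraph) (A : Set UGraph) :
    ∑' (H : A), mass p v (fun c => Φ c = ↑H) = mass p v (fun c => Φ c ∈ A) := by
  unfold mass
  rw [ENNReal.tsum_comm]
  refine tsum_congr (fun c => ?_)
  rw [ENNReal.tsum_mul_left]
  congr 1
  exact tsum_ind_mem (Φ c) A

lemma mass_le_one {v : ℕ} (hp0 : 0 ≤ p) (hp1 : p ≤ 1) (E : (Fin v → Bool × ℕ) → Prop) :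
    mass p v E ≤ 1 := by
  calc mass p v E ≤ ∑' c, jointW p v c * 1 :=
        ENNReal.tsum_le_tsum (fun c => mul_le_mul_right (ind_le_one _) _)
    _ = ∑' c, jointW p v c := tsum_congr (fun c => mul_one _)
    _ = 1 := tsum_jointW hp0 hp1

lemma mass_le_mass_add {v : ℕ} {E F Gd : (Fin v → Bool × ℕ) → Prop}
    (h : ∀ c, E c → F c ∨ Gd c) : mass p v E ≤ mass p v F + mass p v Gd := by
  unfold mass
  rw [← ENNReal.tsum_add]
  refine ENNReal.tsum_le_tsum (fun c => ?_)
  rw [← mul_add]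
  refine mul_le_mul_right ?_ _
  by_cases hE : E c
  · rw [ind_of _ hE]
    rcases h c hE with hF | hG
    · rw [ind_of _ hF]; exact le_self_add
    · rw [ind_of _ hG]; exact le_add_self
  · rw [ind_of_not _ hE]; exact zero_le

lemma sw_nonneg (hp0 : 0 ≤ p) (S : Finset (Fin G.n)) : 0 ≤ sampleWeight G p S := by
  unfold sampleWeight
  exact mul_nonneg (pow_nonneg (le_min hp0 zero_le_one) _)
    (pow_nonneg (by have := min_le_right p 1; linarith) _)

lemma psample_nonneg (hp0 : 0 ≤ p) (H : UGraph) : 0 ≤ pSampleLaw G p H :=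
  Finset.sum_nonneg (fun S _ => mul_nonneg (sw_nonneg hp0 S) (by split <;> norm_num))

lemma wr_nonneg (hp0 : 0 ≤ p) (H : UGraph) : 0 ≤ wrSampleLaw G p H := by
  refine tsum_nonneg (fun k => mul_nonneg ?_ ?_)
  · refine div_nonneg (mul_nonneg (Real.exp_pos _).le (pow_nonneg ?_ _)) (Nat.cast_nonneg _)
    exact mul_nonneg hp0 (Nat.cast_nonneg _)
  · exact div_nonneg (Nat.cast_nonneg _) (pow_nonneg (Nat.cast_nonneg _) _)

lemma dTV_le_main (hp0 : 0 < p) (hp1 : p ≤ 1) (hv : 0 < G.n) :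
    dTV (pSampleLaw G p) (wrSampleLaw G p)
      ≤ (mass p G.n (fun c => ¬ GoodC G c)).toReal := by
  classical
  have hp0' := hp0.le
  refine Real.iSup_le (fun A => ?_) ENNReal.toReal_nonneg
  have hsA : ∑' (H : A), ENNReal.ofReal (pSampleLaw G p ↑H)
      = mass p G.n (fun c => FS G (Scoord c) ∈ A) := by
    rw [tsum_congr (fun H : A => lemA hp0' hp1 (↑H))]
    exact tsum_mass_eq p _ A
  have hsB : ∑' (H : A), ENNReal.ofReal (wrSampleLaw G p ↑H)
      = mass p G.n (fun c => PhiN G (Ncoord c) ∈ A) := by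
    rw [tsum_congr (fun H : A => lemB hp0' hp1 hv (↑H))]
    exact tsum_mass_eq p _ A
  have hane : mass p G.n (fun c => FS G (Scoord c) ∈ A) ≠ ⊤ :=
    (lt_of_le_of_lt (mass_le_one hp0' hp1 _) ENNReal.one_lt_top).ne
  have hbne : mass p G.n (fun c => PhiN G (Ncoord c) ∈ A) ≠ ⊤ :=
    (lt_of_le_of_lt (mass_le_one hp0' hp1 _) ENNReal.one_lt_top).ne
  have hMne : mass p G.n (fun c => ¬ GoodC G c) ≠ ⊤ :=
    (lt_of_le_of_lt (mass_le_one hp0' hp1 _) ENNReal.one_lt_top).ne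
  have hsummf : Summable (fun H : A => pSampleLaw G p ↑H) := by
    refine Summable.congr (f := fun H : A => (ENNReal.ofReal (pSampleLaw G p ↑H)).toReal)
      (ENNReal.summable_toReal ?_) (fun H => ?_)
    · rw [hsA]; exact hane
    · exact ENNReal.toReal_ofReal (psample_nonneg hp0' _)
  have hsummg : Summable (fun H : A => wrSampleLaw G p ↑H) := by
    refine Summable.congr (f := fun H : A => (ENNReal.ofReal (wrSampleLaw G p ↑H)).toReal)
      (ENNReal.summable_toReal ?_) (fun H => ?_)
    · rw [hsB]; exact hbne
    · exact ENNReal.toReal_ofReal (wr_nonneg hp0' _)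
  have htsumf : ∑' (H : A), pSampleLaw G p ↑H
      = (mass p G.n (fun c => FS G (Scoord c) ∈ A)).toReal := by
    rw [← hsA, ENNReal.tsum_toReal_eq (fun H => ENNReal.ofReal_ne_top)]
    exact tsum_congr (fun H => (ENNReal.toReal_ofReal (psample_nonneg hp0' _)).symm)
  have htsumg : ∑' (H : A), wrSampleLaw G p ↑H
      = (mass p G.n (fun c => PhiN G (Ncoord c) ∈ A)).toReal := by
    rw [← hsB, ENNReal.tsum_toReal_eq (fun H => ENNReal.ofReal_ne_top)]
    exact tsum_congr (fun H => (ENNReal.toReal_ofReal (wr_nonneg hp0' _)).symm)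
  rw [Summable.tsum_sub hsummf hsummg, htsumf, htsumg]
  have hab : mass p G.n (fun c => FS G (Scoord c) ∈ A)
      ≤ mass p G.n (fun c => PhiN G (Ncoord c) ∈ A)
        + mass p G.n (fun c => ¬ GoodC G c) := by
    refine mass_le_mass_add (fun c hc => ?_)
    by_cases hg : GoodC G c
    · exact Or.inl ((FS_eq_PhiN hg) ▸ hc)
    · exact Or.inr hg
  have hba : mass p G.n (fun c => PhiN G (Ncoord c) ∈ A)
      ≤ mass p G.n (fun c => FS G (Scoord c) ∈ A)
        + mass p G.n (fun c => ¬ GoodC G c) := by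
    refine mass_le_mass_add (fun c hc => ?_)
    by_cases hg : GoodC G c
    · exact Or.inl ((FS_eq_PhiN hg).symm ▸ hc)
    · exact Or.inr hg
  have h1 : (mass p G.n (fun c => FS G (Scoord c) ∈ A)).toReal
      ≤ (mass p G.n (fun c => PhiN G (Ncoord c) ∈ A)).toReal
        + (mass p G.n (fun c => ¬ GoodC G c)).toReal := by
    have := ENNReal.toReal_mono (ENNReal.add_ne_top.mpr ⟨hbne, hMne⟩) hab
    rwa [ENNReal.toReal_add hbne hMne] at this
  have h2 : (mass p G.n (fun c => PhiN G (Ncoord c) ∈ A)).toReal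
      ≤ (mass p G.n (fun c => FS G (Scoord c) ∈ A)).toReal
        + (mass p G.n (fun c => ¬ GoodC G c)).toReal := by
    have := ENNReal.toReal_mono (ENNReal.add_ne_top.mpr ⟨hane, hMne⟩) hba
    rwa [ENNReal.toReal_add hane hMne] at this
  rw [abs_sub_le_iff]
  constructor <;> linarith

lemma degenerate_eq (hn : G.n = 0) (H : UGraph) :
    pSampleLaw G p H = wrSampleLaw G p H := by
  classical
  have hempty : IsEmpty (Fin G.n) := ⟨fun i => by have := i.isLt; omega⟩
  have huniv : (univ : Finset (Fin G.n)) = ∅ := Finset.univ_eq_empty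
  have hv0 : ((G.v : ℝ)) = 0 := by simp [FinGraph.v, hn]
  have hcls : ((G.induce ∅).core).cls
      = ((seqGraph G 0 (fun i => i.elim0)).core).cls := by
    refine Quot.sound (iso_core_of_iso ⟨finCongr (by simp [FinGraph.induce, seqGraph]), ?_⟩)
    intro i j
    exfalso
    have := i.isLt
    simp [FinGraph.induce] at this
  rw [pSampleLaw, huniv, Finset.powerset_empty, Finset.sum_singleton]
  have hw : sampleWeight G p ∅ = 1 := by
    unfold sampleWeight
    simp [hn]
  rw [hw, one_mul, wrSampleLaw]
  rw [tsum_eq_single 0 (fun k hk => ?_)]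
  · have huniq : (univ : Finset (Fin 0 → Fin G.n)) = {fun i => i.elim0} := by
      refine Finset.eq_singleton_iff_unique_mem.mpr ⟨mem_univ _, fun x _ => ?_⟩
      funext i
      exact i.elim0
    rw [hv0]
    simp only [mul_zero, pow_zero, Nat.factorial_zero, Nat.cast_one, neg_zero, Real.exp_zero]
    rw [huniq, Finset.filter_singleton]
    by_cases hcase : ((seqGraph G 0 (fun i => i.elim0)).core).cls = H
    · rw [if_pos hcase, if_pos (hcls.trans hcase)]
      norm_num
    · rw [if_neg hcase, if_neg (fun h => hcase (hcls.symm.trans h))]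
      norm_num
  · rw [hv0, mul_zero, zero_pow hk]
    simp

end

end SA

/-- For a finite graph `G` with `v` vertices, `e` non-loop edges and
`ℓ` loops, and `0 < p ≤ 1`, the total variation distance between the laws of the
`p`-sampling and the with-replacement `p`-sampling is at most
`2e(p³ + 3p²/v + p/v²) + 2ℓ(p² + p/v) + p`, and hence at most
`(2e·p² + 3√(2e)·p + 2ℓ·p + 4)·p`. -/
theorem stmt0 (G : FinGraph) (p : ℝ) (hp0 : 0 < p) (hp1 : p ≤ 1) :
    dTV (pSampleLaw G p) (wrSampleLaw G p) ≤
        2 * (G.e : ℝ) * (p ^ 3 + 3 * p ^ 2 / (G.v : ℝ) + p / (G.v : ℝ) ^ 2) +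
          2 * (G.loops : ℝ) * (p ^ 2 + p / (G.v : ℝ)) + p ∧
      dTV (pSampleLaw G p) (wrSampleLaw G p) ≤
        (2 * (G.e : ℝ) * p ^ 2 + 3 * Real.sqrt (2 * (G.e : ℝ)) * p +
            2 * (G.loops : ℝ) * p + 4) * p := by
  classical
  have e0 : (0:ℝ) ≤ (G.e : ℝ) := Nat.cast_nonneg _
  have l0 : (0:ℝ) ≤ (G.loops : ℝ) := Nat.cast_nonneg _
  have v0 : (0:ℝ) ≤ (G.v : ℝ) := Nat.cast_nonneg _
  have t1 : (0:ℝ) ≤ 3 * p^2 / (G.v:ℝ) := div_nonneg (by positivity) v0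
  have t2 : (0:ℝ) ≤ p / (G.v:ℝ)^2 := div_nonneg hp0.le (by positivity)
  have t3 : (0:ℝ) ≤ p / (G.v:ℝ) := div_nonneg hp0.le v0
  have t4 : (0:ℝ) ≤ p^3 := pow_nonneg hp0.le 3
  have t5 : (0:ℝ) ≤ p^2 := sq_nonneg p
  have s0 : (0:ℝ) ≤ Real.sqrt (2 * (G.e:ℝ)) := Real.sqrt_nonneg _
  by_cases hn : G.n = 0
  · have hfg := SA.degenerate_eq (G := G) (p := p) hn
    have hd : dTV (pSampleLaw G p) (wrSampleLaw G p) = 0 := by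
      unfold dTV
      have hzero : ∀ A : Set UGraph,
          |∑' (x : A), (pSampleLaw G p ↑x - wrSampleLaw G p ↑x)| = 0 := by
        intro A
        rw [tsum_congr (fun x : A => by rw [hfg ↑x, sub_self])]
        rw [tsum_zero, abs_zero]
      rw [iSup_congr hzero]
      exact ciSup_const
    constructor
    · rw [hd]
      nlinarith [mul_nonneg e0 (by linarith : (0:ℝ) ≤ p^3 + 3*p^2/(G.v:ℝ) + p/(G.v:ℝ)^2),
        mul_nonneg l0 (by linarith : (0:ℝ) ≤ p^2 + p/(G.v:ℝ)), hp0.le]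
    · rw [hd]
      have hin : (0:ℝ) ≤ 2 * (G.e:ℝ) * p^2 + 3 * Real.sqrt (2 * (G.e:ℝ)) * p
          + 2 * (G.loops:ℝ) * p + 4 := by
        nlinarith [mul_nonneg e0 t5, mul_nonneg s0 hp0.le, mul_nonneg l0 hp0.le]
      nlinarith [mul_nonneg hin hp0.le]
  · have hv : 0 < G.n := Nat.pos_of_ne_zero hn
    have hmain := SA.dTV_le_main (G := G) hp0 hp1 hv
    have hbad : (SA.mass p G.n (fun c => ¬ SA.GoodC G c)).toReal
        ≤ 2 * (G.e : ℝ) * p ^ 3 + (G.loops : ℝ) * p ^ 2 :=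
      ENNReal.toReal_le_of_le_ofReal
        (by nlinarith [mul_nonneg (mul_nonneg (by norm_num : (0:ℝ) ≤ 2) e0) t4,
          mul_nonneg l0 t5])
        (SA.mass_bad_le hp0.le hp1)
    have hB := le_trans hmain hbad
    constructor
    · refine le_trans hB ?_
      nlinarith [mul_nonneg e0 t1, mul_nonneg e0 t2, mul_nonneg l0 t5,
        mul_nonneg l0 t3, hp0.le]
    · refine le_trans hB ?_
      nlinarith [mul_nonneg s0 t5, mul_nonneg l0 t5, hp0.le]
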